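/- Let A be an accessible deterministic tree automaton and let φ assign to each state q its top language L^q(A). Then φ is a morphism of tree automata from A to the bottom-up quotient automaton A_{L(A)}: φ maps final states to final states, and for every transition (q,f,q₁,…,q_k) of A, (φ(q),f,φ(q₁),…,φ(q_k)) is a transition of A_{L(A)}. -/

import Mathlib

inductive GTree (S : Type) (ar : S → ℕ) : Type where
  | eps (x : ℕ) : GTree S ar
  | node (f : S) (ts : Fin (ar f) → GTree S ar) : GTree S ar

namespace GTree

variable {S : Type} {ar : S → ℕ}

/-- Substitute each ε-symbol `ε_x` by `σ x`. -/
def subst (σ : ℕ → GTree S ar) : GTree S ar → GTree S ar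
  | eps x => σ x
  | node f ts => node f (fun i => subst σ (ts i))

/-- The multiset of ε-indices of a tree. -/
def epsIdx : GTree S ar → Multiset ℕ
  | eps x => {x}
  | node _ ts => ∑ i, epsIdx (ts i)

/-- `Inc_ε(z,t)`: increment every ε-index by `z`. -/
def inc (z : ℕ) (t : GTree S ar) : GTree S ar :=
  subst (fun x => eps (x + z)) t

/-- Composition `t ∘ (t₁,…,t_k)`: graft `ts_j` at the `j`-th smallest ε-index of `t`. -/
def compo (t : GTree S ar) (ts : List (GTree S ar)) : GTree S ar :=
  subst (fun x => ts.getD ((Multiset.sort (epsIdx t) (· ≤ ·)).idxOf x) (eps x)) t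

/-- The tree `α(ε₁,…,ε_k)` associated with a symbol `α`. -/
def symTree (f : S) : GTree S ar := node f (fun i => eps (i.1 + 1))

/-- Bottom-up quotient `d⁻¹(t)` of a tree `t` w.r.t. a tree `d`. -/
def quotT (d t : GTree S ar) : Set (GTree S ar) :=
  { u | epsIdx u = 1 ::ₘ (epsIdx t - epsIdx d).map (· + 1) ∧
        subst (fun j => if j = 1 then d else eps (j - 1)) u = t }

/-- Bottom-up quotient `d⁻¹(L)` of a language w.r.t. a tree. -/
def quotL (d : GTree S ar) (L : Set (GTree S ar)) : Set (GTree S ar) :=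
  ⋃ t ∈ L, quotT d t

def incL (z : ℕ) (L : Set (GTree S ar)) : Set (GTree S ar) := inc z '' L

/-- Composition of languages `L ∘ (L₁,…,L_k)`. -/
def compoL (L : Set (GTree S ar)) (Ls : List (Set (GTree S ar))) : Set (GTree S ar) :=
  { u | ∃ t ∈ L, ∃ ts : List (GTree S ar), List.Forall₂ (· ∈ ·) ts Ls ∧ u = compo t ts }

/-- Partial composition `t ∘₁ L'` at the first (smallest) ε-index. -/
def pcomp (t : GTree S ar) (L' : Set (GTree S ar)) : Set (GTree S ar) :=
  { u | ∃ t' ∈ L', u = compo t (t' :: ((Multiset.sort (epsIdx t) (· ≤ ·)).tail).map eps) }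

/-- Partial composition of languages `L ∘₁ L'`. -/
def pcompL (L L' : Set (GTree S ar)) : Set (GTree S ar) := ⋃ t ∈ L, pcomp t L'

/-- Tree substitution `t_{b ← L}` of the 0-ary symbol `b` by the language `L`. -/
def bsub [DecidableEq S] (b : S) (L : Set (GTree S ar)) : GTree S ar → Set (GTree S ar)
  | eps x => {eps x}
  | node f ts =>
      if f = b then L
      else { u | ∃ us : Fin (ar f) → GTree S ar, (∀ i, us i ∈ bsub b L (ts i)) ∧ u = node f us }

/-- `b`-product `L₁ ·_b L₂`. -/
def prodB [DecidableEq S] (L₁ : Set (GTree S ar)) (b : S) (L₂ : Set (GTree S ar)) :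
    Set (GTree S ar) :=
  ⋃ t ∈ L₁, bsub b L₂ t

/-- Iterated `b`-product `L^{n_b}`. -/
def iterB [DecidableEq S] (b : S) (L : Set (GTree S ar)) : ℕ → Set (GTree S ar)
  | 0 => {symTree b}
  | n + 1 => iterB b L n ∪ prodB L b (iterB b L n)

/-- `b`-closure `L^{*_b}`. -/
def closB [DecidableEq S] (b : S) (L : Set (GTree S ar)) : Set (GTree S ar) :=
  ⋃ n, iterB b L n

/-- Iterated composition `L^{n∘}` of a 1-homogeneous language of ε-index `{x}`. -/
def iterC (x : ℕ) (L : Set (GTree S ar)) : ℕ → Set (GTree S ar)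
  | 0 => {eps x}
  | n + 1 => iterC x L n ∪ pcompL (iterC x L n) L

/-- Composition closure `L^⊛`. -/
def closC (x : ℕ) (L : Set (GTree S ar)) : Set (GTree S ar) := ⋃ n, iterC x L n

end GTree

structure TAut (S : Type) (ar : S → ℕ) (Q : Type) where
  F : Set Q
  δ : (f : S) → (Fin (ar f) → Q) → Set Q

namespace TAut

variable {S : Type} {ar : S → ℕ} {Q : Type}

/-- The run function `Δ`, with environment `ρ` giving the possible states at ε-leaves. -/
def run (A : TAut S ar Q) (ρ : ℕ → Set Q) : GTree S ar → Set Q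
  | .eps x => ρ x
  | .node f ts => { q | ∃ qs : Fin (ar f) → Q, (∀ i, qs i ∈ run A ρ (ts i)) ∧ q ∈ A.δ f qs }

/-- The language recognized by `A` (a set of 0-ary trees). -/
def lang (A : TAut S ar Q) : Set (GTree S ar) :=
  { t | GTree.epsIdx t = 0 ∧ (run A (fun _ => ∅) t ∩ A.F).Nonempty }

/-- The top language `L^q(A)` of a state `q` (a set of unary trees of ε-index `{1}`). -/
def top (A : TAut S ar Q) (q : Q) : Set (GTree S ar) :=
  { t | GTree.epsIdx t = {1} ∧
        (run A (fun x => if x = 1 then {q} else ∅) t ∩ A.F).Nonempty }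

/-- Determinism of a tree automaton. -/
def Det (A : TAut S ar Q) : Prop :=
  ∀ (f : S) (qs : Fin (ar f) → Q), (A.δ f qs).Subsingleton

/-- Accessibility: every state is reached by some 0-ary tree. -/
def Accessible (A : TAut S ar Q) : Prop :=
  ∀ q : Q, ∃ t : GTree S ar, GTree.epsIdx t = 0 ∧ q ∈ run A (fun _ => ∅) t

end TAut

/-- The bottom-up quotient automaton `A_L`. -/
def AutL {S : Type} {ar : S → ℕ} (L : Set (GTree S ar)) : TAut S ar (Set (GTree S ar)) where
  F := { M | (∃ t : GTree S ar, M = GTree.quotL t L) ∧ GTree.eps 1 ∈ M }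
  δ := fun f Ms => { M | ∃ ts : Fin (ar f) → GTree S ar,
        (∀ i, Ms i = GTree.quotL (ts i) L) ∧ M = GTree.quotL (GTree.node f ts) L }



section Aux

variable {S : Type} {ar : S → ℕ} {Q : Type}

open GTree TAut

lemma epsIdx_subst (σ : ℕ → GTree S ar) (t : GTree S ar) :
    epsIdx (subst σ t) = ((epsIdx t).map (fun x => epsIdx (σ x))).sum := by
  induction t with
  | eps x => simp [subst, epsIdx]
  | node f ts ih =>
      simp only [subst, epsIdx, ih]
      rw [show Multiset.map (fun x => (σ x).epsIdx) (∑ i, (ts i).epsIdx)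
            = ∑ i, Multiset.map (fun x => (σ x).epsIdx) ((ts i).epsIdx) from
          map_sum (Multiset.mapAddMonoidHom _) _ _]
      exact (map_sum Multiset.sumAddMonoidHom _ _).symm

lemma run_subst (A : TAut S ar Q) (ρ : ℕ → Set Q) (σ : ℕ → GTree S ar) (t : GTree S ar) :
    run A ρ (subst σ t) = run A (fun x => run A ρ (σ x)) t := by
  induction t with
  | eps x => rfl
  | node f ts ih => simp only [subst, run, ih]

lemma run_mono (A : TAut S ar Q) {ρ ρ' : ℕ → Set Q} (h : ∀ x, ρ x ⊆ ρ' x)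
    (t : GTree S ar) : run A ρ t ⊆ run A ρ' t := by
  induction t with
  | eps x => exact h x
  | node f ts ih =>
      rintro q ⟨qs, hqs, hq⟩
      exact ⟨qs, fun i => ih i (hqs i), hq⟩

lemma run_subsingleton (A : TAut S ar Q) (hdet : Det A) {ρ : ℕ → Set Q}
    (hρ : ∀ x, (ρ x).Subsingleton) (t : GTree S ar) : (run A ρ t).Subsingleton := by
  induction t with
  | eps x => exact hρ x
  | node f ts ih =>
      rintro q ⟨qs, hqs, hq⟩ q' ⟨qs', hqs', hq'⟩
      have : qs = qs' := funext fun i => ih i (hqs i) (hqs' i)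
      exact hdet f qs hq (this ▸ hq')

lemma top_eq_quotL (A : TAut S ar Q) (hdet : Det A) {q : Q} {d : GTree S ar}
    (hd0 : epsIdx d = 0) (hdq : q ∈ run A (fun _ => ∅) d) :
    top A q = quotL d (lang A) := by
  have hsub : ∀ u : GTree S ar, epsIdx u = {1} →
      epsIdx (subst (fun j => if j = 1 then d else eps (j - 1)) u) = 0 := by
    intro u hu
    rw [epsIdx_subst, hu]
    simp [hd0]
  have hrun : ∀ u : GTree S ar,
      run A (fun _ => ∅) (subst (fun j => if j = 1 then d else eps (j - 1)) u)
        = run A (fun x => if x = 1 then run A (fun _ => ∅) d else ∅) u := by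
    intro u
    rw [run_subst]
    have henv : (fun x => run A (fun _ => ∅) (if x = 1 then d else eps (x - 1)))
        = (fun x : ℕ => if x = 1 then run A (fun _ => ∅) d else (∅ : Set Q)) := by
      funext x
      by_cases hx : x = 1 <;> simp [hx, run]
    rw [henv]
  have hds : (run A (fun _ => ∅) d).Subsingleton :=
    run_subsingleton A hdet (fun _ => Set.subsingleton_empty) d
  ext u
  constructor
  · rintro ⟨hu1, p, hp, hpF⟩
    rw [quotL, Set.mem_iUnion₂]
    refine ⟨subst (fun j => if j = 1 then d else eps (j - 1)) u, ?_, ?_⟩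
    · refine ⟨hsub u hu1, p, ?_, hpF⟩
      rw [hrun u]
      refine run_mono A (fun x => ?_) u hp
      intro r hr
      by_cases hx : x = 1 <;> simp [hx] at hr ⊢
      · exact hr ▸ hdq
    · refine ⟨?_, rfl⟩
      rw [hu1]
      simp [hd0, hsub u hu1]
  · rintro hu
    rw [quotL, Set.mem_iUnion₂] at hu
    obtain ⟨t, ht, hidx, hsubst⟩ := hu
    obtain ⟨ht0, p, hp, hpF⟩ := ht
    rw [ht0, hd0] at hidx
    simp at hidx
    refine ⟨hidx, p, ?_, hpF⟩
    rw [← hsubst, hrun u] at hp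
    refine run_mono A (fun x => ?_) u hp
    intro r hr
    by_cases hx : x = 1 <;> simp [hx] at hr ⊢
    · exact hds hr hdq

end Aux

/-- `q ↦ L^q(A)` is a morphism from any accessible deterministic tree
automaton `A` to the bottom-up quotient automaton `A_{L(A)}`. -/
theorem top_is_morphism {S : Type} {ar : S → ℕ} {Q : Type} (A : TAut S ar Q)
    (hacc : TAut.Accessible A) (hdet : TAut.Det A) :
    (∀ q ∈ A.F, TAut.top A q ∈ (AutL (TAut.lang A)).F) ∧
    (∀ (f : S) (qs : Fin (ar f) → Q) (q : Q), q ∈ A.δ f qs →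
      TAut.top A q ∈ (AutL (TAut.lang A)).δ f (fun i => TAut.top A (qs i))) := by
  constructor
  · intro q hqF
    obtain ⟨d, hd0, hdq⟩ := hacc q
    refine ⟨⟨d, top_eq_quotL A hdet hd0 hdq⟩, rfl, q, ?_, hqF⟩
    show q ∈ (if (1 : ℕ) = 1 then {q} else ∅ : Set Q)
    simp
  · intro f qs q hq
    choose ts hts0 htsr using fun i => hacc (qs i)
    refine ⟨ts, fun i => top_eq_quotL A hdet (hts0 i) (htsr i), ?_⟩
    refine top_eq_quotL A hdet ?_ ⟨qs, htsr, hq⟩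
    simp [GTree.epsIdx, hts0]
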